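/- Let Ψ_H = (1/√3)(|↑↑⟩ + |↓↑⟩ + |↑↓⟩) in ℂ²⊗ℂ², and let m = |↑⟩ − |↓⟩ in ℂ². Then the Sasaki projection of the line spanned by Ψ_H onto the subspace span(m)⊗ℂ² equals the line spanned by m⊗|↓⟩; i.e. (span(m)⊗ℂ²) ⊓ (span(Ψ_H) ⊔ (span(m)⊗ℂ²)ᗮ) = span(m⊗|↓⟩). -/

import Mathlib

noncomputable section

/-- The qubit space ℂ². -/
abbrev Qubit : Type := EuclideanSpace ℂ (Fin 2)

/-- Two-qubit space, modelling ℂ² ⊗ ℂ². -/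
abbrev Qubit2 : Type := EuclideanSpace ℂ (Fin 2 × Fin 2)

/-- Standard basis vector `|i⟩` of ℂ². -/
def e (i : Fin 2) : Qubit := EuclideanSpace.single i 1

/-- The tensor product of two qubit vectors, as an element of `Qubit2`. -/
def tp (v w : Qubit) : Qubit2 := WithLp.toLp 2 (fun p : Fin 2 × Fin 2 => v p.1 * w p.2)

/-- Hardy state: with up = |↑⟩ = e 0, down = |↓⟩ = e 1,
Ψ_H = (1/√3)(|↑↑⟩ + |↓↑⟩ + |↑↓⟩). The Sasaki projection of span(Ψ_H) onto
span(m) ⊗ ℂ², where m = |↑⟩ − |↓⟩, is the line spanned by m ⊗ |↓⟩. -/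
theorem hardy_sasaki :
    let up : Qubit := e 0
    let down : Qubit := e 1
    let m : Qubit := up - down
    let Ψ : Qubit2 := ((Real.sqrt 3 : ℂ))⁻¹ •
      (tp up up + tp down up + tp up down)
    let Q : Submodule ℂ Qubit2 := Submodule.span ℂ {tp m up, tp m down}
    Q ⊓ (Submodule.span ℂ {Ψ} ⊔ Qᗮ) = Submodule.span ℂ {tp m down} := by
  intro up down m Ψ Q
  have hup : up = e 0 := rfl
  have hdown : down = e 1 := rfl
  have hm : m = e 0 - e 1 := rfl
  have hΨ : Ψ = ((Real.sqrt 3 : ℂ))⁻¹ • (tp up up + tp down up + tp up down) := rfl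
  have hs3 : ((Real.sqrt 3 : ℝ) : ℂ) ≠ 0 := by
    norm_cast; positivity
  set mu : Qubit2 := tp m up with hmu
  set md : Qubit2 := tp m down with hmd
  set p : Qubit := up + down with hp
  have hmumu : (inner ℂ mu mu : ℂ) = 2 := by
    simp [hmu, tp, hm, hup, e, PiLp.inner_apply, Fintype.sum_prod_type,
      Fin.sum_univ_two, EuclideanSpace.single_apply, -inner_self_eq_norm_sq_to_K]
    try ring
  have hmumd : (inner ℂ mu md : ℂ) = 0 := by
    simp [hmu, hmd, tp, hm, hup, hdown, e, PiLp.inner_apply, Fintype.sum_prod_type,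
      Fin.sum_univ_two, EuclideanSpace.single_apply]
    try ring
  have hmuPsi : (inner ℂ mu Ψ : ℂ) = 0 := by
    simp [hmu, hΨ, tp, hm, hup, hdown, e, PiLp.inner_apply, Fintype.sum_prod_type,
      Fin.sum_univ_two, EuclideanSpace.single_apply, inner_smul_right]
    try ring
  have h1u : (inner ℂ mu (tp p up) : ℂ) = 0 := by
    simp [hmu, hp, tp, hm, hup, hdown, e, PiLp.inner_apply, Fintype.sum_prod_type,
      Fin.sum_univ_two, EuclideanSpace.single_apply]
    try ring
  have h2u : (inner ℂ md (tp p up) : ℂ) = 0 := by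
    simp [hmd, hp, tp, hm, hup, hdown, e, PiLp.inner_apply, Fintype.sum_prod_type,
      Fin.sum_univ_two, EuclideanSpace.single_apply]
    try ring
  have h1d : (inner ℂ mu (tp p down) : ℂ) = 0 := by
    simp [hmu, hp, tp, hm, hup, hdown, e, PiLp.inner_apply, Fintype.sum_prod_type,
      Fin.sum_univ_two, EuclideanSpace.single_apply]
    try ring
  have h2d : (inner ℂ md (tp p down) : ℂ) = 0 := by
    simp [hmd, hp, tp, hm, hup, hdown, e, PiLp.inner_apply, Fintype.sum_prod_type,
      Fin.sum_univ_two, EuclideanSpace.single_apply]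
    try ring
  have hpuQ : tp p up ∈ Qᗮ := by
    rw [Submodule.mem_orthogonal]
    intro u hu
    obtain ⟨a, b, rfl⟩ := Submodule.mem_span_pair.mp hu
    rw [inner_add_left, inner_smul_left, inner_smul_left, h1u, h2u]; ring
  have hpdQ : tp p down ∈ Qᗮ := by
    rw [Submodule.mem_orthogonal]
    intro u hu
    obtain ⟨a, b, rfl⟩ := Submodule.mem_span_pair.mp hu
    rw [inner_add_left, inner_smul_left, inner_smul_left, h1d, h2d]; ring
  apply le_antisymm
  · rintro x ⟨hxQ, hxS⟩
    obtain ⟨a, b, rfl⟩ := Submodule.mem_span_pair.mp hxQ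
    obtain ⟨y, hy, z, hz, hyz⟩ := Submodule.mem_sup.mp hxS
    obtain ⟨c, rfl⟩ := Submodule.mem_span_singleton.mp hy
    have hmuz : (inner ℂ mu z : ℂ) = 0 :=
      (Submodule.mem_orthogonal Q z).mp hz mu
        (Submodule.subset_span (by left; rfl))
    have hinner : (inner ℂ mu (a • mu + b • md) : ℂ) = 0 := by
      rw [← hyz, inner_add_right, inner_smul_right, hmuPsi, hmuz]
      ring
    rw [inner_add_right, inner_smul_right, inner_smul_right, hmumu, hmumd] at hinner
    have ha : a = 0 := by linear_combination hinner / 2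
    rw [ha, zero_smul, zero_add]
    exact Submodule.mem_span_singleton.mpr ⟨b, rfl⟩
  · rw [Submodule.span_le, Set.singleton_subset_iff]
    constructor
    · exact Submodule.subset_span (by right; rfl)
    · have key : md = (2 * (Real.sqrt 3 : ℂ)) • Ψ +
          ((-2 : ℂ) • tp p up + (-1 : ℂ) • tp p down) := by
        ext q
        have hq : ∀ x : Qubit2, (2 * (Real.sqrt 3 : ℂ)) •
            (((Real.sqrt 3 : ℂ))⁻¹ • x) = (2 : ℂ) • x := by
          intro x
          rw [smul_smul, mul_assoc, mul_inv_cancel₀ hs3, mul_one]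
        rw [hΨ, hq]
        fin_cases q <;>
          simp [hmd, hp, tp, hm, hup, hdown, e, EuclideanSpace.single_apply] <;>
          try ring
      rw [key]
      exact Submodule.add_mem_sup
        (Submodule.mem_span_singleton.mpr ⟨2 * (Real.sqrt 3 : ℂ), rfl⟩)
        (Qᗮ.add_mem (Qᗮ.smul_mem _ hpuQ) (Qᗮ.smul_mem _ hpdQ))
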